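/- Let S = (s_1, …, s_n) with n ≥ 2 be a list over a type with decidable equality having exactly σ distinct elements, let occ(a, S) be the number of occurrences of a in S, let H = Σ_a (occ(a,S)/n)·log₂(n/occ(a,S)) (sum over the distinct elements a of S), and for 2 ≤ i ≤ n let c_i be the number of occurrences of s_i among s_1, …, s_{i−1}. Then Σ_{i=2}^n ( log₂((i−1)/max(c_i, 1)) + 1 ) ≤ n·H + n + (σ + 1)·(log₂ n + 2). -/

import Mathlib

open Finset

private lemma sum_log_le (n : ℕ) (hn : 1 ≤ n) :
    ∑ i ∈ Finset.range n, Real.log i ≤ n * Real.log n - n + 1 := by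
  induction n, hn using Nat.le_induction with
  | base => simp
  | succ n hn ih =>
    rw [Finset.sum_range_succ]
    have hn0 : (0:ℝ) < n := by exact_mod_cast hn
    have h1 : Real.log ((n:ℝ)/(n+1)) ≤ (n:ℝ)/(n+1) - 1 :=
      Real.log_le_sub_one_of_pos (by positivity)
    rw [Real.log_div (by positivity) (by positivity)] at h1
    have h2 : (n:ℝ)/(n+1) - 1 = -1/(n+1) := by field_simp; ring
    rw [h2] at h1
    -- h1 : log n - log (n+1) ≤ -1/(n+1)
    have h3 : ((n:ℝ)+1) * (Real.log n - Real.log (n+1)) ≤ -1 := by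
      have := mul_le_mul_of_nonneg_left h1 (le_of_lt (by positivity : (0:ℝ) < (n:ℝ)+1))
      calc ((n:ℝ)+1) * (Real.log n - Real.log (n+1)) ≤ ((n:ℝ)+1) * (-1/((n:ℝ)+1)) := this
        _ = -1 := by field_simp
    push_cast
    nlinarith [ih]

private lemma sum_log_ge (m : ℕ) (hm : 1 ≤ m) :
    (m:ℝ) * Real.log m - m - Real.log m + 1 ≤
      ∑ k ∈ Finset.range m, Real.log ((max k 1 : ℕ) : ℝ) := by
  induction m, hm using Nat.le_induction with
  | base => simp
  | succ m hm ih =>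
    rw [Finset.sum_range_succ]
    have hmax : max m 1 = m := max_eq_left hm
    rw [hmax]
    have hm0 : (0:ℝ) < m := by exact_mod_cast hm
    have h1 : Real.log (((m:ℝ)+1)/m) ≤ ((m:ℝ)+1)/m - 1 :=
      Real.log_le_sub_one_of_pos (by positivity)
    rw [Real.log_div (by positivity) (by positivity)] at h1
    have h2 : ((m:ℝ)+1)/m - 1 = 1/m := by field_simp; ring
    rw [h2] at h1
    have h3 : (m:ℝ) * (Real.log (m+1) - Real.log m) ≤ 1 := by
      have := mul_le_mul_of_nonneg_left h1 (le_of_lt hm0)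
      calc (m:ℝ) * (Real.log ((m:ℝ)+1) - Real.log m) ≤ (m:ℝ) * (1/(m:ℝ)) := this
        _ = 1 := by field_simp
    push_cast at ih ⊢
    nlinarith [ih]

private lemma sum_take_count {α : Type*} [DecidableEq α] (d : α) (g : ℕ → ℝ) (S : List α) :
    ∑ i ∈ Finset.range S.length, g ((S.take i).count (S.getD i d)) =
      ∑ a ∈ S.toFinset, ∑ k ∈ Finset.range (S.count a), g k := by
  induction S using List.reverseRecOn with
  | nil => simp
  | append_singleton T b ih =>
    have hlen : (T ++ [b]).length = T.length + 1 := by simp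
    rw [hlen, Finset.sum_range_succ]
    have hstep : ∀ i ∈ Finset.range T.length,
        g (((T ++ [b]).take i).count ((T ++ [b]).getD i d)) =
        g ((T.take i).count (T.getD i d)) := by
      intro i hi
      rw [Finset.mem_range] at hi
      rw [List.take_append_of_le_length (le_of_lt hi), List.getD_append _ _ _ _ hi]
    rw [Finset.sum_congr rfl hstep]
    have hlast : g (((T ++ [b]).take T.length).count ((T ++ [b]).getD T.length d)) =
        g (T.count b) := by
      rw [List.take_left, List.getD_append_right _ _ _ _ (le_refl _)]
      simp
    rw [hlast, ih]
    -- RHS side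
    have htf : (T ++ [b]).toFinset = insert b T.toFinset := by
      ext x; simp [List.toFinset_append, or_comm]
    rw [htf]
    have hcount : ∀ a, (T ++ [b]).count a = T.count a + if a = b then 1 else 0 := by
      intro a
      simp [List.count_append, List.count_singleton', eq_comm]
    have hsplit : ∀ a ∈ insert b T.toFinset,
        ∑ k ∈ Finset.range ((T ++ [b]).count a) , g k =
        (∑ k ∈ Finset.range (T.count a), g k) + if a = b then g (T.count a) else 0 := by
      intro a _
      rw [hcount a]
      split_ifs with h
      · rw [Finset.sum_range_succ]
      · simp
    rw [Finset.sum_congr rfl hsplit, Finset.sum_add_distrib,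
      Finset.sum_ite_eq' (insert b T.toFinset) b (fun a => g (T.count a)),
      if_pos (Finset.mem_insert_self b _)]
    congr 1
    by_cases hb : b ∈ T.toFinset
    · rw [Finset.insert_eq_self.mpr hb]
    · rw [Finset.sum_insert hb]
      have : T.count b = 0 := by
        rw [List.count_eq_zero]
        simpa using hb
      simp [this]


/-- Theorem 5 (comparison count): the total number of ternary comparisons
`Σ_{i=2}^n (log₂((i−1)/max(c_i,1)) + 1)` used by the online stable sorting
algorithm is at most `nH + n + (σ+1)(log₂ n + 2)`.  Here the sum is written over
zero-based positions `i` of `S` (the position-`0` term, corresponding to the first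
element, is zero), `c` is the number of previous occurrences of the current
element, `σ` is the number of distinct elements and `H` is the entropy of the
distribution of the elements of `S`. -/
theorem online_ternary_comparison_bound {α : Type*} [DecidableEq α] (S : List α)
    (n σ : ℕ) (hn : n = S.length) (hn2 : 2 ≤ n) (hσ : σ = S.toFinset.card) (H : ℝ)
    (hH : H = ∑ a ∈ S.toFinset,
      ((S.count a : ℝ) / n) * Real.logb 2 ((n : ℝ) / (S.count a))) :
    (∑ i : Fin S.length, if i.val = 0 then (0 : ℝ) else
        Real.logb 2 ((i.val : ℝ) /
          ((max ((S.take i.val).count (S.get i)) 1 : ℕ) : ℝ)) + 1) ≤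
      n * H + n + (σ + 1) * (Real.logb 2 n + 2) := by
  have hlen : 2 ≤ S.length := hn ▸ hn2
  have hd : 0 < S.length := by omega
  set d : α := S.get ⟨0, hd⟩ with hdd
  set A : ℝ := ∑ i ∈ Finset.range S.length, Real.log i with hAdef
  set B : ℝ := ∑ i ∈ Finset.range S.length,
      Real.log ((max ((S.take i).count (S.getD i d)) 1 : ℕ) : ℝ) with hBdef
  set Sml : ℝ := ∑ a ∈ S.toFinset, (S.count a : ℝ) * Real.log (S.count a) with hSmldef
  set Sl : ℝ := ∑ a ∈ S.toFinset, Real.log (S.count a) with hSldef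
  have hD : (0:ℝ) < Real.log 2 := Real.log_pos (by norm_num)
  -- step 1 : rewrite the sum
  have h1 : (∑ i : Fin S.length, if i.val = 0 then (0 : ℝ) else
        Real.logb 2 ((i.val : ℝ) /
          ((max ((S.take i.val).count (S.get i)) 1 : ℕ) : ℝ)) + 1)
      = ∑ i ∈ Finset.range S.length,
        ((Real.log i - Real.log ((max ((S.take i).count (S.getD i d)) 1 : ℕ) : ℝ))
            / Real.log 2 + (if i = 0 then 0 else 1)) := by
    rw [← Fin.sum_univ_eq_sum_range]
    refine Finset.sum_congr rfl fun i _ => ?_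
    have hget : S.get i = S.getD i.val d := by
      simp [List.getD_eq_getElem S d i.isLt, List.get_eq_getElem]
    by_cases h0 : i.val = 0
    · simp [h0, ← hget]
    · rw [if_neg h0, if_neg h0, hget]
      have hx : ((i.val : ℕ) : ℝ) ≠ 0 := Nat.cast_ne_zero.mpr h0
      have hy : ((max ((S.take i.val).count (S.getD i.val d)) 1 : ℕ) : ℝ) ≠ 0 :=
        Nat.cast_ne_zero.mpr (by omega)
      rw [Real.logb, Real.log_div hx hy]
  rw [h1]
  have h2 : ∑ i ∈ Finset.range S.length,
        ((Real.log i - Real.log ((max ((S.take i).count (S.getD i d)) 1 : ℕ) : ℝ))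
            / Real.log 2 + (if i = 0 then 0 else 1))
      = (A - B) / Real.log 2 + ((S.length : ℝ) - 1) := by
    rw [Finset.sum_add_distrib]
    congr 1
    · rw [← Finset.sum_div, Finset.sum_sub_distrib]
    · have hc : ∀ i ∈ Finset.range S.length,
          (if i = 0 then (0:ℝ) else 1) = 1 - (if i = 0 then 1 else 0) := by
        intro i _; split_ifs <;> norm_num
      rw [Finset.sum_congr rfl hc, Finset.sum_sub_distrib, Finset.sum_const,
        Finset.card_range, nsmul_eq_mul, mul_one,
        Finset.sum_ite_eq' (Finset.range S.length) 0 (fun _ => (1:ℝ)),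
        if_pos (Finset.mem_range.mpr (by omega))]
  rw [h2]
  -- facts
  have hcount_pos : ∀ a ∈ S.toFinset, 1 ≤ S.count a := fun a ha =>
    List.count_pos_iff.mpr (List.mem_toFinset.mp ha)
  have hsumc : ∑ a ∈ S.toFinset, (S.count a : ℝ) = (S.length : ℝ) := by
    have := Multiset.toFinset_sum_count_eq (↑S : Multiset α)
    simp only [List.toFinset_coe, Multiset.coe_count, Multiset.coe_card] at this
    exact_mod_cast congrArg (Nat.cast : ℕ → ℝ) this
  have hA : A ≤ (S.length : ℝ) * Real.log S.length - S.length + 1 :=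
    sum_log_le S.length (by omega)
  have hBgroup : B = ∑ a ∈ S.toFinset, ∑ k ∈ Finset.range (S.count a),
      Real.log ((max k 1 : ℕ) : ℝ) :=
    sum_take_count d (fun k => Real.log ((max k 1 : ℕ) : ℝ)) S
  have hB : Sml - (S.length : ℝ) - Sl + σ ≤ B := by
    have : ∑ a ∈ S.toFinset,
        ((S.count a : ℝ) * Real.log (S.count a) - S.count a - Real.log (S.count a) + 1)
        ≤ B := by
      rw [hBgroup]
      exact Finset.sum_le_sum fun a ha => sum_log_ge _ (hcount_pos a ha)
    calc Sml - (S.length : ℝ) - Sl + σ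
        = ∑ a ∈ S.toFinset,
          ((S.count a : ℝ) * Real.log (S.count a) - S.count a - Real.log (S.count a) + 1) := by
          rw [hσ]
          simp only [Finset.sum_add_distrib, Finset.sum_sub_distrib, Finset.sum_const,
            nsmul_eq_mul, mul_one, hSmldef, hSldef, hsumc]
      _ ≤ B := this
  have hSl : Sl ≤ (σ : ℝ) * Real.log S.length := by
    rw [hσ]
    calc Sl ≤ ∑ _a ∈ S.toFinset, Real.log S.length := by
          apply Finset.sum_le_sum
          intro a ha
          apply Real.log_le_log (by exact_mod_cast hcount_pos a ha)
          exact_mod_cast (List.count_le_length : S.count a ≤ S.length)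
      _ = (S.toFinset.card : ℝ) * Real.log S.length := by
          rw [Finset.sum_const, nsmul_eq_mul]
  have hσ1 : 1 ≤ (σ : ℝ) := by
    have : S.toFinset.Nonempty := by
      refine ⟨d, List.mem_toFinset.mpr ?_⟩
      exact List.get_mem S ⟨0, hd⟩
    have := Finset.card_pos.mpr this
    rw [hσ]; exact_mod_cast this
  have hlogn : Real.log 2 ≤ Real.log S.length := by
    apply Real.log_le_log (by norm_num)
    exact_mod_cast hlen
  -- entropy
  have hnH : (n : ℝ) * H = ((n : ℝ) * Real.log n - Sml) / Real.log 2 := by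
    rw [hH, Finset.mul_sum]
    have hterm : ∀ a ∈ S.toFinset,
        (n : ℝ) * ((S.count a : ℝ) / n * Real.logb 2 ((n : ℝ) / (S.count a)))
        = ((S.count a : ℝ) * Real.log n - (S.count a : ℝ) * Real.log (S.count a))
            / Real.log 2 := by
      intro a ha
      have hm : (0:ℝ) < (S.count a : ℝ) := by exact_mod_cast hcount_pos a ha
      have hn0 : (0:ℝ) < (n : ℝ) := by positivity
      rw [Real.logb, Real.log_div (ne_of_gt hn0) (ne_of_gt hm)]
      field_simp
    rw [Finset.sum_congr rfl hterm, ← Finset.sum_div, Finset.sum_sub_distrib,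
      ← Finset.sum_mul, hsumc, ← hn, hSmldef]
  -- key inequality
  have hnn : (n : ℝ) = (S.length : ℝ) := by exact_mod_cast hn
  have key : A - B + ((S.length : ℝ) - 1) * Real.log 2 ≤
      ((n : ℝ) * Real.log n - Sml) + (n : ℝ) * Real.log 2
        + ((σ : ℝ) + 1) * (Real.log n + 2 * Real.log 2) := by
    rw [hnn]
    nlinarith [hA, hB, hSl, hσ1, hlogn, hD, mul_nonneg (le_trans zero_le_one hσ1) hD.le]
  calc (A - B) / Real.log 2 + ((S.length : ℝ) - 1)
      = (A - B + ((S.length : ℝ) - 1) * Real.log 2) / Real.log 2 := by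
        field_simp
    _ ≤ (((n : ℝ) * Real.log n - Sml) + (n : ℝ) * Real.log 2
          + ((σ : ℝ) + 1) * (Real.log n + 2 * Real.log 2)) / Real.log 2 := by
        gcongr
    _ = (n : ℝ) * H + n + ((σ : ℝ) + 1) * (Real.logb 2 n + 2) := by
        rw [hnH, Real.logb]
        field_simp
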